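/- If for each interface the limiter is defined by α_{i+1/2} = min(R_i^{+}, R_{i+1}^{-}) when g_{i+1/2}^{AD} < 0 and α_{i+1/2} = min(R_i^{-}, R_{i+1}^{+}) when g_{i+1/2}^{AD} > 0, with R_i^{−} = min(1, min(0,Q_i^-)/P_i^-) (interpreted as 1 when P_i^- = 0) and R_i^{+} = min(1, max(0,Q_i^+)/P_i^+) (interpreted as 1 when P_i^+ = 0), where P_i^- = min(0,−g_{i+1/2}^{AD}) + min(0, g_{i−1/2}^{AD}) and P_i^+ = max(0,−g_{i+1/2}^{AD}) + max(0, g_{i−1/2}^{AD}), and Q_i^- ≤ 0 ≤ Q_i^+, then for every i: Q_i^- ≤ −α_{i+1/2} g_{i+1/2}^{AD} + α_{i−1/2} g_{i−1/2}^{AD} ≤ Q_i^+ and α_{i+1/2} ∈ [0,1]. -/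
import Mathlib


/-- The approximate flux limiters keep the antidiffusive correction within the
prescribed one-sided bounds, and lie in `[0,1]`. -/
theorem flux_limiters_satisfy_bounds
    (g Qm Qp Pm Pp Rm Rp α : ℤ → ℝ)
    (hQ : ∀ i, Qm i ≤ 0 ∧ 0 ≤ Qp i)
    (hPm : ∀ i, Pm i = min 0 (-(g i)) + min 0 (g (i - 1)))
    (hPp : ∀ i, Pp i = max 0 (-(g i)) + max 0 (g (i - 1)))
    (hRm : ∀ i, Rm i = if Pm i = 0 then 1 else min 1 (min 0 (Qm i) / Pm i))
    (hRp : ∀ i, Rp i = if Pp i = 0 then 1 else min 1 (max 0 (Qp i) / Pp i))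
    (hαneg : ∀ i, g i < 0 → α i = min (Rp i) (Rm (i + 1)))
    (hαpos : ∀ i, 0 < g i → α i = min (Rm i) (Rp (i + 1)))
    (hαzero : ∀ i, g i = 0 → 0 ≤ α i ∧ α i ≤ 1) :
    ∀ i : ℤ,
      (Qm i ≤ -(α i) * g i + α (i - 1) * g (i - 1) ∧
        -(α i) * g i + α (i - 1) * g (i - 1) ≤ Qp i) ∧
      0 ≤ α i ∧ α i ≤ 1 := by
  have hPm0 : ∀ i, Pm i ≤ 0 := by
    intro i; rw [hPm i]
    have h1 := min_le_left (0:ℝ) (-(g i))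
    have h2 := min_le_left (0:ℝ) (g (i - 1))
    linarith
  have hPp0 : ∀ i, 0 ≤ Pp i := by
    intro i; rw [hPp i]
    have h1 := le_max_left (0:ℝ) (-(g i))
    have h2 := le_max_left (0:ℝ) (g (i - 1))
    linarith
  have hRm01 : ∀ i, 0 ≤ Rm i ∧ Rm i ≤ 1 := by
    intro i; rw [hRm i]
    split_ifs with h
    · exact ⟨zero_le_one, le_refl 1⟩
    · have hlt : Pm i < 0 := lt_of_le_of_ne (hPm0 i) h
      have hdiv : 0 ≤ min 0 (Qm i) / Pm i :=
        div_nonneg_of_nonpos (min_le_left _ _) hlt.le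
      exact ⟨le_min zero_le_one hdiv, min_le_left _ _⟩
  have hRp01 : ∀ i, 0 ≤ Rp i ∧ Rp i ≤ 1 := by
    intro i; rw [hRp i]
    split_ifs with h
    · exact ⟨zero_le_one, le_refl 1⟩
    · have hlt : 0 < Pp i := lt_of_le_of_ne (hPp0 i) (Ne.symm h)
      have hdiv : 0 ≤ max 0 (Qp i) / Pp i :=
        div_nonneg (le_max_left _ _) hlt.le
      exact ⟨le_min zero_le_one hdiv, min_le_left _ _⟩
  have hα01 : ∀ i, 0 ≤ α i ∧ α i ≤ 1 := by
    intro i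
    rcases lt_trichotomy (g i) 0 with h | h | h
    · rw [hαneg i h]
      exact ⟨le_min (hRp01 i).1 (hRm01 (i+1)).1,
        le_trans (min_le_left _ _) (hRp01 i).2⟩
    · exact hαzero i h
    · rw [hαpos i h]
      exact ⟨le_min (hRm01 i).1 (hRp01 (i+1)).1,
        le_trans (min_le_left _ _) (hRm01 i).2⟩
  have hii : ∀ i : ℤ, i - 1 + 1 = i := fun i => sub_add_cancel i 1
  intro i
  refine ⟨⟨?_, ?_⟩, hα01 i⟩
  · -- lower bound: Qm i ≤ Rm i * Pm i ≤ sum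
    have h1 : Rm i * min 0 (-(g i)) ≤ α i * (-(g i)) := by
      rcases lt_trichotomy (g i) 0 with h | h | h
      · calc Rm i * min 0 (-(g i)) ≤ 0 :=
              mul_nonpos_of_nonneg_of_nonpos (hRm01 i).1 (min_le_left _ _)
          _ ≤ α i * (-(g i)) := mul_nonneg (hα01 i).1 (by linarith)
      · simp [h]
      · rw [min_eq_right (by linarith : -(g i) ≤ (0:ℝ))]
        have hle : α i ≤ Rm i := (hαpos i h) ▸ min_le_left _ _
        exact mul_le_mul_of_nonpos_right hle (by linarith)
    have h2 : Rm i * min 0 (g (i - 1)) ≤ α (i - 1) * g (i - 1) := by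
      rcases lt_trichotomy (g (i - 1)) 0 with h | h | h
      · rw [min_eq_right h.le]
        have hle : α (i - 1) ≤ Rm i := by
          have := hαneg (i - 1) h
          rw [hii i] at this
          exact this ▸ min_le_right _ _
        exact mul_le_mul_of_nonpos_right hle h.le
      · simp [h]
      · calc Rm i * min 0 (g (i - 1)) ≤ 0 :=
              mul_nonpos_of_nonneg_of_nonpos (hRm01 i).1 (min_le_left _ _)
          _ ≤ α (i - 1) * g (i - 1) := mul_nonneg (hα01 (i - 1)).1 h.le
    have hQmP : Qm i ≤ Rm i * Pm i := by
      rcases eq_or_lt_of_le (hPm0 i) with h | h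
      · rw [h, mul_zero]; exact (hQ i).1
      · rw [hRm i, if_neg h.ne]
        have hQm : min 0 (Qm i) = Qm i := min_eq_right (hQ i).1
        have hle : min 1 (min 0 (Qm i) / Pm i) ≤ Qm i / Pm i := by
          rw [hQm] at *; exact min_le_right _ _
        have := mul_le_mul_of_nonpos_right hle (h.le)
        rwa [div_mul_cancel₀ _ h.ne] at this
    have hexp : Rm i * Pm i = Rm i * min 0 (-(g i)) + Rm i * min 0 (g (i - 1)) := by
      rw [hPm i, mul_add]
    nlinarith [h1, h2, hQmP]
  · -- upper bound
    have h1 : α i * (-(g i)) ≤ Rp i * max 0 (-(g i)) := by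
      rcases lt_trichotomy (g i) 0 with h | h | h
      · rw [max_eq_right (by linarith : (0:ℝ) ≤ -(g i))]
        have hle : α i ≤ Rp i := (hαneg i h) ▸ min_le_left _ _
        exact mul_le_mul_of_nonneg_right hle (by linarith)
      · simp [h]
      · calc α i * (-(g i)) ≤ 0 :=
              mul_nonpos_of_nonneg_of_nonpos (hα01 i).1 (by linarith)
          _ ≤ Rp i * max 0 (-(g i)) := mul_nonneg (hRp01 i).1 (le_max_left _ _)
    have h2 : α (i - 1) * g (i - 1) ≤ Rp i * max 0 (g (i - 1)) := by
      rcases lt_trichotomy (g (i - 1)) 0 with h | h | h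
      · calc α (i - 1) * g (i - 1) ≤ 0 :=
              mul_nonpos_of_nonneg_of_nonpos (hα01 (i - 1)).1 h.le
          _ ≤ Rp i * max 0 (g (i - 1)) := mul_nonneg (hRp01 i).1 (le_max_left _ _)
      · simp [h]
      · rw [max_eq_right h.le]
        have hle : α (i - 1) ≤ Rp i := by
          have := hαpos (i - 1) h
          rw [hii i] at this
          exact this ▸ min_le_right _ _
        exact mul_le_mul_of_nonneg_right hle h.le
    have hQpP : Rp i * Pp i ≤ Qp i := by
      rcases eq_or_lt_of_le (hPp0 i) with h | h
      · rw [← h, mul_zero]; exact (hQ i).2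
      · rw [hRp i, if_neg h.ne']
        have hQp : max 0 (Qp i) = Qp i := max_eq_right (hQ i).2
        have hle : min 1 (max 0 (Qp i) / Pp i) ≤ Qp i / Pp i := by
          rw [hQp] at *; exact min_le_right _ _
        have := mul_le_mul_of_nonneg_right hle h.le
        rwa [div_mul_cancel₀ _ h.ne'] at this
    have hexp : Rp i * Pp i = Rp i * max 0 (-(g i)) + Rp i * max 0 (g (i - 1)) := by
      rw [hPp i, mul_add]
    nlinarith [h1, h2, hQpP]
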